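/- The quaternion j is the unique quaternion root of P(x) = x^2 - (i+j)x + k: if q is a quaternion with q^2 - (i+j)q + k = 0, then q = j. -/

import Mathlib

open Quaternion
theorem j_is_unique_root (q i j k : ℍ[ℝ])
    (hi : i = ⟨0, 1, 0, 0⟩) (hj : j = ⟨0, 0, 1, 0⟩) (hk : k = ⟨0, 0, 0, 1⟩)
    (hq : q ^ 2 - (i + j) * q + k = 0) :
    q = j := by
  rw [Quaternion.ext_iff] at hq ⊢
  simp [pow_two, Quaternion.re_mul, Quaternion.imI_mul, Quaternion.imJ_mul, Quaternion.imK_mul] at hq ⊢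
  subst hi hj hk
  obtain ⟨a, b, c, d⟩ := q
  simp only at hq ⊢
  obtain ⟨e1, e2, e3, e4⟩ := hq
  have hd : d = a * (b - c) := by linear_combination (e3 - e2) / 2
  subst hd
  have hat : a * (b + c - 1) = 0 := by linear_combination (e2 + e3) / 2
  have hs : (b - c) * (2 * a ^ 2 + 1) = -1 := by linear_combination e4
  have hkey : (1 - (b - c) ^ 2) * (a ^ 2 + 1 / 2) = (b + c - 1) ^ 2 / 2 := by
    linear_combination e1
  have h5 : 4 * a ^ 4 * (a ^ 2 + 1) * (a ^ 2 + 1 / 2) = 0 := by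
    linear_combination (2 * a ^ 2 + 1) ^ 2 * a ^ 2 * hkey
      - (a ^ 2 + 1 / 2) * a ^ 2 * ((b - c) * (2 * a ^ 2 + 1) - 1) * hs
      + a ^ 2 * (2 * a ^ 2 + 1) * ((b - c) * (2 * a ^ 2 + 1) - 1) * hs
      + ((2 * a ^ 2 + 1) ^ 2 / 2) * (a * (b + c - 1)) * hat
  have ha2 : a ^ 2 = 0 := by nlinarith [sq_nonneg a, sq_nonneg (a ^ 2), h5]
  have ha : a = 0 := sq_eq_zero_iff.mp ha2
  subst ha
  have hc : c = b + 1 := by nlinarith [hs]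
  have hb : b = 0 := by nlinarith [e1, hc]
  refine ⟨rfl, hb, by simp [hc, hb], by ring⟩
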